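/- For the 3/2 model generator, setting κ = √((1/2 + a/σ²)² + αβ(β−1)) − (1/2 + a/σ²), the pair λ = θκ and φ(x) = x^{−κ} satisfies (1/2)σ²x³φ''(x) + (θ−ax)xφ'(x) − (1/2)αβ(β−1)σ²xφ(x) = −λφ(x) for all x > 0. -/

import Mathlib

/-- 3/2 model eigenpair: with κ = √((1/2 + a/σ²)² + αβ(β−1)) − (1/2 + a/σ²),
the pair (θκ, x^{−κ}) solves the eigenvalue equation. -/
theorem three_halves_eigenpair (a θ σ α β : ℝ) (ha : 0 < a) (hθ : 0 < θ) (hσ : 0 < σ)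
    (hα0 : 0 < α) (hα1 : α ≤ 1) (hβ : β * (β - 1) ≥ 0)
    (κ : ℝ) (hκ : κ = Real.sqrt ((1/2 + a/σ^2)^2 + α*β*(β-1)) - (1/2 + a/σ^2))
    (φ : ℝ → ℝ) (hφ : ∀ x, φ x = x ^ (-κ))
    (lam : ℝ) (hlam : lam = θ * κ) :
    ∀ x > 0,
      (1/2) * σ^2 * x^3 * deriv (deriv φ) x + (θ - a * x) * x * deriv φ x
        - (1/2) * α * β * (β - 1) * σ^2 * x * φ x = -lam * φ x := by
  have hφe : φ = fun x : ℝ => x ^ (-κ) := funext hφ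
  have hσ2 : (0:ℝ) < σ^2 := by positivity
  -- key algebraic identity for κ
  have harg : (0:ℝ) ≤ (1/2 + a/σ^2)^2 + α*β*(β-1) := by
    have : 0 ≤ α * (β * (β-1)) := mul_nonneg hα0.le hβ
    nlinarith [sq_nonneg (1/2 + a/σ^2)]
  have hs : (Real.sqrt ((1/2 + a/σ^2)^2 + α*β*(β-1)))^2
      = (1/2 + a/σ^2)^2 + α*β*(β-1) := Real.sq_sqrt harg
  have hkey : κ^2 + (1 + 2*a/σ^2) * κ = α*β*(β-1) := by
    rw [hκ]; linear_combination hs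
  -- first derivative
  have hd1 : ∀ x : ℝ, x ≠ 0 → deriv φ x = -κ * x ^ (-κ - 1) := by
    intro x hx
    rw [hφe]
    exact (Real.hasDerivAt_rpow_const (Or.inl hx)).deriv
  intro x hx
  have hxne : x ≠ 0 := ne_of_gt hx
  -- second derivative
  have hEq : deriv φ =ᶠ[nhds x] fun y => -κ * y ^ (-κ - 1) := by
    filter_upwards [isOpen_compl_singleton.mem_nhds (by simpa using hxne :
      x ∈ ({0}ᶜ : Set ℝ))] with y hy
    exact hd1 y hy
  have hd2 : deriv (deriv φ) x = -κ * ((-κ - 1) * x ^ (-κ - 1 - 1)) := by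
    rw [hEq.deriv_eq]
    exact (((Real.hasDerivAt_rpow_const (Or.inl hxne))).const_mul (-κ)).deriv
  rw [hd2, hd1 x hxne, hφ, hlam]
  have e1 : x ^ (-κ - 1) = x ^ (-κ) * x⁻¹ := by
    rw [show -κ - 1 = -κ + (-1) by ring, Real.rpow_add hx, Real.rpow_neg_one]
  have e2 : x ^ (-κ - 1 - 1) = x ^ (-κ) * x⁻¹ * x⁻¹ := by
    rw [show -κ - 1 - 1 = (-κ - 1) + (-1) by ring, Real.rpow_add hx, Real.rpow_neg_one, e1]
  rw [e1, e2]
  have hkey' : σ^2 * κ^2 + σ^2 * κ + 2*a*κ = α*β*(β-1)*σ^2 := by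
    have := hkey
    field_simp at this
    nlinarith [this]
  field_simp
  linear_combination x * hkey'
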